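/- If a finite graph G admits an involutive automorphism f such that for every edge e = {u,v} of G, the image edge f(e) = {f(u), f(v)} is vertex-disjoint from e, then the second player has a winning strategy in Arc-Kayles played on G. -/
import Mathlib


open SimpleGraph Finset

variable {V : Type*} [Fintype V] [DecidableEq V]

/-- A legal move in Arc-Kayles on position `s` (the set of remaining vertices of `G`):
pick an edge of the remaining graph and delete its two endpoints. -/
def AKLegal (G : SimpleGraph V) (s : Finset V) (u v : V) : Prop :=
  u ∈ s ∧ v ∈ s ∧ G.Adj u v

/-- Fuel-indexed winning predicate for Arc-Kayles (normal play). -/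
def AKWinAux (G : SimpleGraph V) : ℕ → Finset V → Prop
  | 0, _ => False
  | n + 1, s => ∃ u v, AKLegal G s u v ∧ ¬ AKWinAux G n (s \ {u, v})

/-- The player to move wins Arc-Kayles from position `s`. (The fuel `s.card` bounds
the number of moves, since every move removes two vertices.) -/
def AKFirstWins (G : SimpleGraph V) (s : Finset V) : Prop :=
  AKWinAux G s.card s

theorem ak_aux (G : SimpleGraph V) (f : G ≃g G)
    (hinv : ∀ x : V, f (f x) = x)
    (hdisj : ∀ u v : V, G.Adj u v → f u ≠ u ∧ f u ≠ v ∧ f v ≠ u ∧ f v ≠ v) :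
    ∀ n : ℕ, ∀ s : Finset V, (∀ x ∈ s, f x ∈ s) → s.card ≤ n → ¬ AKWinAux G n s := by
  intro n
  induction n using Nat.strong_induction_on with
  | _ n ih =>
    match n with
    | 0 => intro s _ _ h; exact h
    | n + 1 =>
      rintro s hs hcard ⟨u, v, ⟨hu, hv, huv⟩, hlose⟩
      have huv' : u ≠ v := G.ne_of_adj huv
      obtain ⟨hfu, hfuv, hfvu, hfv⟩ := hdisj u v huv
      have h2 : 2 ≤ s.card := Finset.one_lt_card.mpr ⟨u, hu, v, hv, huv'⟩
      obtain ⟨m, rfl⟩ : ∃ m, n = m + 1 := ⟨n - 1, by omega⟩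
      apply hlose
      have hfuv' : f u ≠ f v := fun h => huv' (f.injective h)
      have hmemfu : f u ∈ s \ {u, v} := by
        simp only [Finset.mem_sdiff, Finset.mem_insert, Finset.mem_singleton]
        exact ⟨hs u hu, by tauto⟩
      have hmemfv : f v ∈ s \ {u, v} := by
        simp only [Finset.mem_sdiff, Finset.mem_insert, Finset.mem_singleton]
        exact ⟨hs v hv, by tauto⟩
      refine ⟨f u, f v, ⟨hmemfu, hmemfv, f.map_adj_iff.mpr huv⟩, ?_⟩
      apply ih m (by omega)
      · intro x hx
        simp only [Finset.mem_sdiff, Finset.mem_insert, Finset.mem_singleton] at hx ⊢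
        push_neg at hx
        obtain ⟨⟨hxs, hxu, hxv⟩, hxfu, hxfv⟩ := hx
        push_neg
        refine ⟨⟨hs x hxs, ?_, ?_⟩, ?_, ?_⟩
        · intro h; apply hxfu; rw [← hinv x, h]
        · intro h; apply hxfv; rw [← hinv x, h]
        · intro h; exact hxu (f.injective h)
        · intro h; exact hxv (f.injective h)
      · have hc1 : (s \ {u, v}).card = s.card - 2 := by
          rw [Finset.card_sdiff_of_subset (Finset.insert_subset hu (Finset.singleton_subset_iff.mpr hv))]
          rw [Finset.card_pair huv']
        have hc2 : ((s \ {u, v}) \ {f u, f v}).card = (s \ {u, v}).card - 2 := by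
          rw [Finset.card_sdiff_of_subset (Finset.insert_subset hmemfu (Finset.singleton_subset_iff.mpr hmemfv))]
          rw [Finset.card_pair hfuv']
        omega

/-- If a finite graph `G` admits an involutive automorphism `f` such that every edge is
vertex-disjoint from its image, then the second player wins Arc-Kayles on `G`. -/
theorem stmt_1 (G : SimpleGraph V) (f : G ≃g G)
    (hinv : ∀ x : V, f (f x) = x)
    (hdisj : ∀ u v : V, G.Adj u v → f u ≠ u ∧ f u ≠ v ∧ f v ≠ u ∧ f v ≠ v) :
    ¬ AKFirstWins G Finset.univ := by
  exact ak_aux G f hinv hdisj _ _ (fun x _ => Finset.mem_univ _) le_rfl
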